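/- For every n ≥ 0 and each j ∈ {1,…,d}: E[(Y_{1j}(n) − θ/2)²] = (θ/2)x_{n;θ} + λ(u_{n;θ} − (θ/2)x_{n;θ}), E[(Y_{2j}(n) − θ/2)²] = (θ/2)x_{n;θ} + λ(v_{n;θ} − (θ/2)x_{n;θ}), and E[(Y_{ij}(n) − (1−θ)/2)²] = ((1−θ)/2)x_{n;1−θ} + λ(w_{n;1−θ} − ((1−θ)/2)x_{n;1−θ}) for i = 3, 4. -/

import Mathlib

open Finset Filter

namespace Broadcast

/-- The root distribution `π = (θ/2, θ/2, (1-θ)/2, (1-θ)/2)`. -/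
noncomputable def rootDist (θ : ℝ) (i : Fin 4) : ℝ :=
  if (i : ℕ) < 2 then θ / 2 else (1 - θ) / 2

/-- The transition matrix `P i j = λ · 1{i=j} + (1-λ) π_j`. -/
noncomputable def trans (θ lam : ℝ) (i j : Fin 4) : ℝ :=
  (if i = j then lam else 0) + (1 - lam) * rootDist θ j

/-- Vertices at level `n` of the infinite rooted `d`-ary tree, encoded as paths. -/
abbrev Vtx (d n : ℕ) := Fin n → Fin d

/-- Configurations (assignments of states) on level `n`. -/
abbrev Config (d n : ℕ) := Vtx d n → Fin 4

/-- Restriction of a level-`(n+1)` configuration to the subtree of the `j`-th child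
of the root. -/
def restrict {d n : ℕ} (j : Fin d) (A : Config d (n + 1)) : Config d n :=
  fun p => A (Fin.cons j p)

/-- `lik θ λ d n i A` is the probability of observing the configuration `A` on level `n`,
given that the root is in state `i` (the broadcasting process). -/
noncomputable def lik (θ lam : ℝ) (d : ℕ) : (n : ℕ) → Fin 4 → Config d n → ℝ
  | 0, i, A => if A Fin.elim0 = i then 1 else 0
  | n + 1, i, A =>
      ∏ j : Fin d, ∑ k : Fin 4, trans θ lam i k * lik θ lam d n k (restrict j A)

/-- Unconditional probability of observing the configuration `A` on level `n`. -/
noncomputable def marg (θ lam : ℝ) (d n : ℕ) (A : Config d n) : ℝ :=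
  ∑ i : Fin 4, rootDist θ i * lik θ lam d n i A

/-- The posterior `f_n(i, A) = P(σ_ρ = i ∣ σ(n) = A)`. -/
noncomputable def post (θ lam : ℝ) (d n : ℕ) (i : Fin 4) (A : Config d n) : ℝ :=
  rootDist θ i * lik θ lam d n i A / marg θ lam d n A

/-- Expectation of `g(σ(n))` conditioned on the root being in state `r`,
i.e. `E g(σ^r(n))`. -/
noncomputable def condE (θ lam : ℝ) (d n : ℕ) (r : Fin 4) (g : Config d n → ℝ) : ℝ :=
  ∑ A : Config d n, lik θ lam d n r A * g A

/-- Unconditional expectation of `g(σ(n))`. -/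
noncomputable def uncondE (θ lam : ℝ) (d n : ℕ) (g : Config d n → ℝ) : ℝ :=
  ∑ A : Config d n, marg θ lam d n A * g A

/-- `x_{n;θ} = E f_n(1, σ¹(n)) - θ/2`. -/
noncomputable def xT (θ lam : ℝ) (d n : ℕ) : ℝ :=
  condE θ lam d n 0 (fun A => post θ lam d n 0 A) - θ / 2

/-- `y_{n;θ} = E f_n(2, σ¹(n)) - θ/2`. -/
noncomputable def yT (θ lam : ℝ) (d n : ℕ) : ℝ :=
  condE θ lam d n 0 (fun A => post θ lam d n 1 A) - θ / 2

/-- `z_{n;θ} = E f_n(1, σ³(n)) - θ/2`. -/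
noncomputable def zT (θ lam : ℝ) (d n : ℕ) : ℝ :=
  condE θ lam d n 2 (fun A => post θ lam d n 0 A) - θ / 2

/-- `x_{n;1-θ} = E f_n(3, σ³(n)) - (1-θ)/2`. -/
noncomputable def xH (θ lam : ℝ) (d n : ℕ) : ℝ :=
  condE θ lam d n 2 (fun A => post θ lam d n 2 A) - (1 - θ) / 2

/-- `y_{n;1-θ} = E f_n(4, σ³(n)) - (1-θ)/2`. -/
noncomputable def yH (θ lam : ℝ) (d n : ℕ) : ℝ :=
  condE θ lam d n 2 (fun A => post θ lam d n 3 A) - (1 - θ) / 2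

/-- `z_{n;1-θ} = E f_n(3, σ¹(n)) - (1-θ)/2`. -/
noncomputable def zH (θ lam : ℝ) (d n : ℕ) : ℝ :=
  condE θ lam d n 0 (fun A => post θ lam d n 2 A) - (1 - θ) / 2

/-- `u_{n;θ} = E (f_n(1, σ¹(n)) - θ/2)²`. -/
noncomputable def uT (θ lam : ℝ) (d n : ℕ) : ℝ :=
  condE θ lam d n 0 (fun A => (post θ lam d n 0 A - θ / 2) ^ 2)

/-- `v_{n;θ} = E (f_n(2, σ¹(n)) - θ/2)²`. -/
noncomputable def vT (θ lam : ℝ) (d n : ℕ) : ℝ :=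
  condE θ lam d n 0 (fun A => (post θ lam d n 1 A - θ / 2) ^ 2)

/-- `w_{n;θ} = E (f_n(1, σ³(n)) - θ/2)²`. -/
noncomputable def wT (θ lam : ℝ) (d n : ℕ) : ℝ :=
  condE θ lam d n 2 (fun A => (post θ lam d n 0 A - θ / 2) ^ 2)

/-- `w_{n;1-θ} = E (f_n(3, σ¹(n)) - (1-θ)/2)²`. -/
noncomputable def wH (θ lam : ℝ) (d n : ℕ) : ℝ :=
  condE θ lam d n 0 (fun A => (post θ lam d n 2 A - (1 - θ) / 2) ^ 2)

/-- `Y_{ij}(n) = f_n(i, σ_j(n+1))`, viewed as a function of the level-`(n+1)`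
configuration. -/
noncomputable def Yf (θ lam : ℝ) (d n : ℕ) (i : Fin 4) (j : Fin d)
    (A : Config d (n + 1)) : ℝ :=
  post θ lam d n i (restrict j A)

/-- `Z_i(n)`, viewed as a function of the level-`(n+1)` configuration. -/
noncomputable def Zf (θ lam : ℝ) (d n : ℕ) (i : Fin 4) (A : Config d (n + 1)) : ℝ :=
  if (i : ℕ) < 2 then
    ∏ j : Fin d, (1 + (2 * lam / θ) * (Yf θ lam d n i j A - θ / 2))
  else
    ∏ j : Fin d, (1 + (2 * lam / (1 - θ)) * (Yf θ lam d n i j A - (1 - θ) / 2))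

/-- `S = (θ/2)Z₁ + (θ/2)Z₂ + ((1-θ)/2)Z₃ + ((1-θ)/2)Z₄`. -/
noncomputable def Sf (θ lam : ℝ) (d n : ℕ) (A : Config d (n + 1)) : ℝ :=
  θ / 2 * Zf θ lam d n 0 A + θ / 2 * Zf θ lam d n 1 A
    + (1 - θ) / 2 * Zf θ lam d n 2 A + (1 - θ) / 2 * Zf θ lam d n 3 A

/-- Total variation distance between the laws of `σ^i(n)` and `σ^j(n)`. -/
noncomputable def dTV (θ lam : ℝ) (d n : ℕ) (i j : Fin 4) : ℝ :=
  (∑ A : Config d n, |lik θ lam d n i A - lik θ lam d n j A|) / 2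

/-- The model is reconstructible if for some pair of root states the total variation
distance between the conditioned level-`n` configurations does not vanish. -/
def Reconstructible (θ lam : ℝ) (d : ℕ) : Prop :=
  ∃ i j : Fin 4, 0 < Filter.limsup (fun n => dTV θ lam d n i j) Filter.atTop

/-- Probability that the root is in state `i` and the states at the vertices
`v 1, …, v k ∈ L(M)` are `c 1, …, c k`. -/
noncomputable def jointRootEvent (θ lam : ℝ) (d M k : ℕ) (v : Fin k → Vtx d M)
    (c : Fin k → Fin 4) (i : Fin 4) : ℝ :=
  ∑ A : Config d M,
    if ∀ t, A (v t) = c t then rootDist θ i * lik θ lam d M i A else 0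

/-- Conditional probability `P(σ_ρ = i ∣ σ_{v t} = c t, 1 ≤ t ≤ k)`. -/
noncomputable def condRoot (θ lam : ℝ) (d M k : ℕ) (v : Fin k → Vtx d M)
    (c : Fin k → Fin 4) (i : Fin 4) : ℝ :=
  jointRootEvent θ lam d M k v c i / ∑ i' : Fin 4, jointRootEvent θ lam d M k v c i'


section Aux

variable {θ lam : ℝ} {d : ℕ}

lemma rootDist_pos (hθ : θ ∈ Set.Ioo (0 : ℝ) 1) (i : Fin 4) : 0 < rootDist θ i := by
  unfold rootDist
  split
  · linarith [hθ.1]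
  · linarith [hθ.2]

lemma rootDist0 : rootDist θ 0 = θ / 2 := rfl
lemma rootDist1 : rootDist θ 1 = θ / 2 := rfl
lemma rootDist2 : rootDist θ 2 = (1 - θ) / 2 := rfl
lemma rootDist3 : rootDist θ 3 = (1 - θ) / 2 := rfl

lemma sum_rootDist : ∑ i : Fin 4, rootDist θ i = 1 := by
  rw [Fin.sum_univ_four, rootDist0, rootDist1, rootDist2, rootDist3]
  ring

lemma sum_trans (i : Fin 4) : ∑ k : Fin 4, trans θ lam i k = 1 := by
  unfold trans
  rw [Finset.sum_add_distrib, ← Finset.mul_sum, sum_rootDist, Finset.sum_ite_eq]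
  simp

lemma lik_nonneg (hP : ∀ i j : Fin 4, 0 ≤ trans θ lam i j) :
    ∀ (n : ℕ) (i : Fin 4) (A : Config d n), 0 ≤ lik θ lam d n i A
  | 0, i, A => by
    unfold lik; split <;> norm_num
  | n + 1, i, A =>
    Finset.prod_nonneg fun j _ => Finset.sum_nonneg fun k _ =>
      mul_nonneg (hP i k) (lik_nonneg hP n k _)

/-- The equivalence between level-`(n+1)` configurations and `d`-tuples of level-`n`
configurations. -/
def cfgEquiv (d n : ℕ) : Config d (n + 1) ≃ (Fin d → Config d n) where
  toFun A := fun j p => A (Fin.cons j p)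
  invFun B := fun q => B (q 0) (Fin.tail q)
  left_inv A := by funext q; simp [Fin.cons_self_tail]
  right_inv B := by funext j p; simp

lemma sum_config_succ {n : ℕ} (F : Fin d → Config d n → ℝ) :
    ∑ A : Config d (n + 1), ∏ j : Fin d, F j (restrict j A)
      = ∏ j : Fin d, ∑ B : Config d n, F j B := by
  rw [Finset.prod_univ_sum, Fintype.piFinset_univ]
  exact Fintype.sum_equiv (cfgEquiv d n) _ _ fun A => rfl

lemma lik_succ {n : ℕ} (i : Fin 4) (A : Config d (n + 1)) :
    lik θ lam d (n + 1) i A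
      = ∏ j : Fin d, ∑ k : Fin 4, trans θ lam i k * lik θ lam d n k (restrict j A) := rfl

lemma lik_sum_one : ∀ (n : ℕ) (i : Fin 4), ∑ A : Config d n, lik θ lam d n i A = 1
  | 0, i => by
    calc ∑ A : Config d 0, lik θ lam d 0 i A
        = ∑ A : Config d 0, (if (Equiv.funUnique (Vtx d 0) (Fin 4)) A = i then (1:ℝ) else 0) := by
          refine Finset.sum_congr rfl fun A _ => ?_
          show (if A Fin.elim0 = i then (1:ℝ) else 0) = _
          rw [Subsingleton.elim (Fin.elim0 : Vtx d 0) default]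
          rfl
      _ = ∑ k : Fin 4, (if k = i then (1:ℝ) else 0) :=
            Equiv.sum_comp (Equiv.funUnique (Vtx d 0) (Fin 4))
              (fun k => if k = i then (1:ℝ) else 0)
      _ = 1 := by simp
  | n + 1, i => by
    simp_rw [lik_succ]
    rw [sum_config_succ (fun (j : Fin d) (B : Config d n) =>
      ∑ k : Fin 4, trans θ lam i k * lik θ lam d n k B)]
    rw [Finset.prod_eq_one]
    intro j _
    rw [Finset.sum_comm]
    simp_rw [← Finset.mul_sum, lik_sum_one n, mul_one]
    exact sum_trans i

lemma condE_restrict {n : ℕ} (r : Fin 4) (j : Fin d) (g : Config d n → ℝ) :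
    condE θ lam d (n + 1) r (fun A => g (restrict j A))
      = ∑ k : Fin 4, trans θ lam r k * condE θ lam d n k g := by
  have key : ∀ A : Config d (n + 1),
      lik θ lam d (n + 1) r A * g (restrict j A)
        = ∏ j' : Fin d,
            ((∑ k : Fin 4, trans θ lam r k * lik θ lam d n k (restrict j' A))
              * (if j' = j then g (restrict j' A) else 1)) := by
    intro A
    rw [Finset.prod_mul_distrib, Finset.prod_ite_eq', lik_succ]
    simp
  unfold condE
  simp_rw [key]
  rw [sum_config_succ (fun (j' : Fin d) (B : Config d n) =>
    (∑ k : Fin 4, trans θ lam r k * lik θ lam d n k B) * (if j' = j then g B else 1))]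
  rw [Finset.prod_eq_single j]
  · show (∑ B : Config d n, (∑ k : Fin 4, trans θ lam r k * lik θ lam d n k B)
        * (if j = j then g B else 1)) = _
    have hj : (∑ B : Config d n, (∑ k : Fin 4, trans θ lam r k * lik θ lam d n k B)
          * (if j = j then g B else 1))
        = ∑ B : Config d n, ∑ k : Fin 4,
            (trans θ lam r k * lik θ lam d n k B) * g B :=
      Finset.sum_congr rfl fun B _ => by rw [if_pos rfl, Finset.sum_mul]
    rw [hj]
    rw [Finset.sum_comm]
    refine Finset.sum_congr rfl fun k _ => ?_
    rw [Finset.mul_sum]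
    refine Finset.sum_congr rfl fun B _ => by ring
  · intro b _ hb
    simp only [if_neg hb, mul_one]
    rw [Finset.sum_comm]
    simp_rw [← Finset.mul_sum, lik_sum_one, mul_one]
    exact sum_trans r
  · intro h; exact absurd (Finset.mem_univ j) h

lemma uncondE_eq {n : ℕ} (g : Config d n → ℝ) :
    uncondE θ lam d n g = ∑ i : Fin 4, rootDist θ i * condE θ lam d n i g := by
  unfold uncondE marg condE
  simp_rw [Finset.sum_mul, Finset.mul_sum, mul_assoc]
  exact Finset.sum_comm

lemma condE_one {n : ℕ} (i : Fin 4) : condE θ lam d n i (fun _ => 1) = 1 := by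
  unfold condE; simp_rw [mul_one]; exact lik_sum_one n i

lemma lik_eq_zero (hθ : θ ∈ Set.Ioo (0 : ℝ) 1) (hP : ∀ i j : Fin 4, 0 ≤ trans θ lam i j)
    {n : ℕ} {A : Config d n} (h : marg θ lam d n A = 0) (i : Fin 4) :
    lik θ lam d n i A = 0 := by
  have h0 : ∀ k ∈ (Finset.univ : Finset (Fin 4)), 0 ≤ rootDist θ k * lik θ lam d n k A :=
    fun k _ => mul_nonneg (rootDist_pos hθ k).le (lik_nonneg hP n k A)
  have := (Finset.sum_eq_zero_iff_of_nonneg h0).mp h i (Finset.mem_univ i)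
  rcases mul_eq_zero.mp this with h' | h'
  · exact absurd h' (rootDist_pos hθ i).ne'
  · exact h'

lemma uncondE_post_mul (hθ : θ ∈ Set.Ioo (0 : ℝ) 1)
    (hP : ∀ i j : Fin 4, 0 ≤ trans θ lam i j) {n : ℕ} (i : Fin 4) (g : Config d n → ℝ) :
    uncondE θ lam d n (fun A => post θ lam d n i A * g A)
      = rootDist θ i * condE θ lam d n i g := by
  unfold uncondE condE post
  rw [Finset.mul_sum]
  refine Finset.sum_congr rfl fun A _ => ?_
  by_cases h : marg θ lam d n A = 0
  · rw [h, lik_eq_zero hθ hP h i]; ring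
  · field_simp

lemma uncondE_one (hθ : θ ∈ Set.Ioo (0 : ℝ) 1) {n : ℕ} :
    uncondE θ lam d n (fun _ => (1:ℝ)) = 1 := by
  rw [uncondE_eq]
  simp_rw [condE_one, mul_one]
  exact sum_rootDist

lemma condE_sub_const {n : ℕ} (i : Fin 4) (f : Config d n → ℝ) (c : ℝ) :
    condE θ lam d n i (fun A => f A - c) = condE θ lam d n i f - c := by
  unfold condE
  simp_rw [mul_sub, Finset.sum_sub_distrib, ← Finset.sum_mul]
  rw [show (∑ A : Config d n, lik θ lam d n i A) = 1 from lik_sum_one n i, one_mul]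

lemma uncondE_sq (hθ : θ ∈ Set.Ioo (0 : ℝ) 1)
    (hP : ∀ i j : Fin 4, 0 ≤ trans θ lam i j) {n : ℕ} (i : Fin 4) :
    uncondE θ lam d n (fun A => (post θ lam d n i A - rootDist θ i) ^ 2)
      = rootDist θ i
          * (condE θ lam d n i (fun A => post θ lam d n i A) - rootDist θ i) := by
  set c := rootDist θ i with hc
  have h1 : uncondE θ lam d n (fun A => (post θ lam d n i A - c) ^ 2)
      = uncondE θ lam d n (fun A => post θ lam d n i A * (post θ lam d n i A - c))
        - c * uncondE θ lam d n (fun A => post θ lam d n i A * 1)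
        + c ^ 2 * uncondE θ lam d n (fun _ => 1) := by
    unfold uncondE
    rw [Finset.mul_sum, Finset.mul_sum, ← Finset.sum_sub_distrib, ← Finset.sum_add_distrib]
    exact Finset.sum_congr rfl fun A _ => by ring
  rw [h1, uncondE_post_mul hθ hP i _, uncondE_post_mul hθ hP i _, uncondE_one hθ,
    condE_sub_const, condE_one]
  ring

lemma trans_expand (r : Fin 4) (c : Fin 4 → ℝ) :
    ∑ k : Fin 4, trans θ lam r k * c k
      = lam * c r + (1 - lam) * ∑ k : Fin 4, rootDist θ k * c k := by
  unfold trans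
  simp_rw [add_mul, Finset.sum_add_distrib, ite_mul, zero_mul, Finset.sum_ite_eq,
    Finset.mem_univ, if_pos, Finset.mul_sum, mul_assoc]

lemma trans_perm (s : Equiv.Perm (Fin 4)) (hs : ∀ i, rootDist θ (s i) = rootDist θ i)
    (i k : Fin 4) : trans θ lam (s i) (s k) = trans θ lam i k := by
  unfold trans
  rw [hs k]
  congr 1
  simp

lemma lik_perm (s : Equiv.Perm (Fin 4)) (hs : ∀ i, rootDist θ (s i) = rootDist θ i) :
    ∀ (n : ℕ) (i : Fin 4) (A : Config d n),
      lik θ lam d n (s i) (fun p => s (A p)) = lik θ lam d n i A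
  | 0, i, A => by
    show (if (fun p => s (A p)) Fin.elim0 = s i then (1:ℝ) else 0) = (if A Fin.elim0 = i then 1 else 0)
    simp [Equiv.apply_eq_iff_eq]
  | n + 1, i, A => by
    rw [lik_succ, lik_succ]
    refine Finset.prod_congr rfl fun j _ => ?_
    rw [← Equiv.sum_comp s
      (fun k => trans θ lam (s i) k * lik θ lam d n k (restrict j fun p => s (A p)))]
    refine Finset.sum_congr rfl fun k _ => ?_
    rw [trans_perm s hs,
      show restrict j (fun p => s (A p)) = fun p => s (restrict j A p) from rfl,
      lik_perm s hs n k (restrict j A)]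

lemma marg_perm (s : Equiv.Perm (Fin 4)) (hs : ∀ i, rootDist θ (s i) = rootDist θ i)
    {n : ℕ} (A : Config d n) : marg θ lam d n (fun p => s (A p)) = marg θ lam d n A := by
  unfold marg
  rw [← Equiv.sum_comp s (fun i => rootDist θ i * lik θ lam d n i (fun p => s (A p)))]
  exact Finset.sum_congr rfl fun i _ => by rw [hs i, lik_perm s hs n i A]

lemma post_perm (s : Equiv.Perm (Fin 4)) (hs : ∀ i, rootDist θ (s i) = rootDist θ i)
    {n : ℕ} (i : Fin 4) (A : Config d n) :
    post θ lam d n (s i) (fun p => s (A p)) = post θ lam d n i A := by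
  unfold post
  rw [hs i, lik_perm s hs n i A, marg_perm s hs A]

lemma condE_perm (s : Equiv.Perm (Fin 4)) (hs : ∀ i, rootDist θ (s i) = rootDist θ i)
    {n : ℕ} (r : Fin 4) (g : Config d n → ℝ) :
    condE θ lam d n (s r) g = condE θ lam d n r (fun A => g (fun p => s (A p))) := by
  unfold condE
  rw [← Equiv.sum_comp (Equiv.arrowCongr (Equiv.refl (Vtx d n)) s)
    (fun A => lik θ lam d n (s r) A * g A)]
  refine Finset.sum_congr rfl fun A _ => ?_
  have hA : (Equiv.arrowCongr (Equiv.refl (Vtx d n)) s) A = fun p => s (A p) := rfl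
  rw [hA, lik_perm s hs n r A]

end Aux

/-- Second moments of `Y_{ij}(n)`:
`E(Y_{1j}-θ/2)² = (θ/2)x_{n;θ} + λ(u_{n;θ}-(θ/2)x_{n;θ})`,
`E(Y_{2j}-θ/2)² = (θ/2)x_{n;θ} + λ(v_{n;θ}-(θ/2)x_{n;θ})`, and
`E(Y_{ij}-(1-θ)/2)² = ((1-θ)/2)x_{n;1-θ} + λ(w_{n;1-θ}-((1-θ)/2)x_{n;1-θ})` for `i = 3, 4`. -/
theorem Y_second_moments (θ lam : ℝ) (hθ : θ ∈ Set.Ioo (0 : ℝ) 1) (hlam : |lam| ≤ 1)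
    (hP : ∀ i j : Fin 4, 0 ≤ trans θ lam i j) (d : ℕ) (hd : 2 ≤ d) (n : ℕ) :
    ∀ j : Fin d,
      condE θ lam d (n + 1) 0 (fun A => (Yf θ lam d n 0 j A - θ / 2) ^ 2)
          = θ / 2 * xT θ lam d n + lam * (uT θ lam d n - θ / 2 * xT θ lam d n) ∧
      condE θ lam d (n + 1) 0 (fun A => (Yf θ lam d n 1 j A - θ / 2) ^ 2)
          = θ / 2 * xT θ lam d n + lam * (vT θ lam d n - θ / 2 * xT θ lam d n) ∧
      ∀ i : Fin 4, 2 ≤ (i : ℕ) →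
        condE θ lam d (n + 1) 0 (fun A => (Yf θ lam d n i j A - (1 - θ) / 2) ^ 2)
          = (1 - θ) / 2 * xH θ lam d n
            + lam * (wH θ lam d n - (1 - θ) / 2 * xH θ lam d n) := by
  intro j
  have main : ∀ i : Fin 4,
      condE θ lam d (n + 1) 0 (fun A => (Yf θ lam d n i j A - rootDist θ i) ^ 2)
        = lam * condE θ lam d n 0 (fun B => (post θ lam d n i B - rootDist θ i) ^ 2)
          + (1 - lam) * (rootDist θ i
              * (condE θ lam d n i (fun B => post θ lam d n i B) - rootDist θ i)) := by
    intro i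
    have h := condE_restrict (θ := θ) (lam := lam) (n := n) 0 j
      (fun B => (post θ lam d n i B - rootDist θ i) ^ 2)
    rw [show (fun A => (Yf θ lam d n i j A - rootDist θ i) ^ 2)
        = (fun A => (fun B : Config d n => (post θ lam d n i B - rootDist θ i) ^ 2)
            (restrict j A)) from rfl, h,
      trans_expand 0 (fun k => condE θ lam d n k
        (fun B => (post θ lam d n i B - rootDist θ i) ^ 2)),
      ← uncondE_eq, uncondE_sq hθ hP i]
  -- the two swap permutations
  set s01 : Equiv.Perm (Fin 4) := Equiv.swap 0 1 with hs01def
  set s23 : Equiv.Perm (Fin 4) := Equiv.swap 2 3 with hs23def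
  have hsw01 : ∀ i : Fin 4, rootDist θ (s01 i) = rootDist θ i := by
    intro i
    fin_cases i <;>
      simp [hs01def, Equiv.swap_apply_def, rootDist,
        show ¬((3:Fin 4):ℕ) < 2 by decide, show ¬((2:Fin 4):ℕ) < 2 by decide,
        show ((1:Fin 4):ℕ) < 2 by decide, show ((0:Fin 4):ℕ) < 2 by decide]
  have hsw23 : ∀ i : Fin 4, rootDist θ (s23 i) = rootDist θ i := by
    intro i
    fin_cases i <;>
      simp [hs23def, Equiv.swap_apply_def, rootDist,
        show ¬((3:Fin 4):ℕ) < 2 by decide, show ¬((2:Fin 4):ℕ) < 2 by decide,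
        show ((1:Fin 4):ℕ) < 2 by decide, show ((0:Fin 4):ℕ) < 2 by decide]
  refine ⟨?_, ?_, ?_⟩
  · have h0 := main 0
    rw [rootDist0] at h0
    rw [h0]
    unfold uT xT
    ring
  · have h1 := main 1
    rw [rootDist1] at h1
    have e1 : condE θ lam d n 1 (fun B => post θ lam d n 1 B)
        = condE θ lam d n 0 (fun B => post θ lam d n 0 B) := by
      have hp := condE_perm (lam := lam) s01 hsw01 (n := n) 0 (fun B => post θ lam d n 1 B)
      have hs0 : s01 0 = 1 := Equiv.swap_apply_left 0 1
      rw [hs0] at hp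
      rw [hp]
      congr 1
      funext A
      calc post θ lam d n 1 (fun p => s01 (A p))
          = post θ lam d n (s01 0) (fun p => s01 (A p)) := by rw [hs0]
        _ = post θ lam d n 0 A := post_perm s01 hsw01 0 A
    rw [h1, e1]
    unfold vT xT
    ring
  · intro i hi
    have h23 : i = 2 ∨ i = 3 := by
      have hlt := i.isLt
      rcases Nat.lt_or_ge (i : ℕ) 3 with h | h
      · left; exact Fin.ext (by omega)
      · right; exact Fin.ext (by omega)
    have hs2 : s23 2 = 3 := Equiv.swap_apply_left 2 3
    have hs3 : s23 3 = 2 := Equiv.swap_apply_right 2 3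
    have hsz : s23 0 = 0 := Equiv.swap_apply_of_ne_of_ne (by decide) (by decide)
    rcases h23 with rfl | rfl
    · have h2 := main 2
      rw [rootDist2] at h2
      rw [h2]
      unfold wH xH
      ring
    · have h3 := main 3
      rw [rootDist3] at h3
      have e3a : condE θ lam d n 0 (fun B => (post θ lam d n 3 B - (1 - θ) / 2) ^ 2)
          = condE θ lam d n 0 (fun B => (post θ lam d n 2 B - (1 - θ) / 2) ^ 2) := by
        have hp := condE_perm (lam := lam) s23 hsw23 (n := n) 0
          (fun B => (post θ lam d n 3 B - (1 - θ) / 2) ^ 2)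
        rw [hsz] at hp
        rw [hp]
        congr 1
        funext A
        have : post θ lam d n 3 (fun p => s23 (A p)) = post θ lam d n 2 A := by
          calc post θ lam d n 3 (fun p => s23 (A p))
              = post θ lam d n (s23 2) (fun p => s23 (A p)) := by rw [hs2]
            _ = post θ lam d n 2 A := post_perm s23 hsw23 2 A
        rw [this]
      have e3b : condE θ lam d n 3 (fun B => post θ lam d n 3 B)
          = condE θ lam d n 2 (fun B => post θ lam d n 2 B) := by
        have hp := condE_perm (lam := lam) s23 hsw23 (n := n) 2 (fun B => post θ lam d n 3 B)
        rw [hs2] at hp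
        rw [hp]
        congr 1
        funext A
        calc post θ lam d n 3 (fun p => s23 (A p))
            = post θ lam d n (s23 2) (fun p => s23 (A p)) := by rw [hs2]
          _ = post θ lam d n 2 A := post_perm s23 hsw23 2 A
      rw [h3, e3a, e3b]
      unfold wH xH
      ring

end Broadcast
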